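/- arXiv:1805.08146 — 2 statements merged into one kernel-verified Lean document; each statement's English description precedes it below -/
import Mathlib

section
/- Every subgroup of finite index in G₂ = ⟨x, y, z : [x,y] = 1, zxz⁻¹ = x⁻¹, zyz⁻¹ = y⁻¹⟩ is isomorphic to either G₂ itself or to Z³. -/
/-- The relations of `G₂ = ⟨x, y, z : xyx⁻¹y⁻¹ = 1, zxz⁻¹ = x⁻¹, zyz⁻¹ = y⁻¹⟩`,
with `x, y, z` being the generators `0, 1, 2 : Fin 3`. -/
def relsG2 : Set (FreeGroup (Fin 3)) :=
  { FreeGroup.of 0 * FreeGroup.of 1 * (FreeGroup.of 0)⁻¹ * (FreeGroup.of 1)⁻¹,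
    FreeGroup.of 2 * FreeGroup.of 0 * (FreeGroup.of 2)⁻¹ * FreeGroup.of 0,
    FreeGroup.of 2 * FreeGroup.of 1 * (FreeGroup.of 2)⁻¹ * FreeGroup.of 1 }

/-- The fundamental group `G₂ = π₁(𝒢₂)`. -/
abbrev G2 : Type := PresentedGroup relsG2

/-- The generator `x` of `G₂`. -/
def X : G2 := PresentedGroup.of 0
/-- The generator `y` of `G₂`. -/
def Y : G2 := PresentedGroup.of 1
/-- The generator `z` of `G₂`. -/
def Z : G2 := PresentedGroup.of 2

noncomputable def latticeBasis {M : Type*} [AddCommGroup M]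
    {ι : Type*} [Fintype ι] (b : Module.Basis ι ℤ M) (A : Submodule ℤ M)
    (n : ℤ) (hn : n ≠ 0) (h : ∀ x : M, n • x ∈ A) : Module.Basis (Fin (Fintype.card ι)) ℤ A := by
  haveI : Module.Finite ℤ M := Module.Finite.of_basis b
  haveI : Module.Free ℤ M := Module.Free.of_basis b
  obtain ⟨k, bA⟩ := Submodule.basisOfPid b A
  have hff := Module.Finite.of_basis bA
  have hcard : k = Fintype.card ι := by
    have h1 := Module.finrank_eq_card_basis bA
    simp only [Fintype.card_fin] at h1
    have h2 : Module.finrank ℤ M = Fintype.card ι := Module.finrank_eq_card_basis b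
    have hle := A.finrank_le
    have hge : Module.finrank ℤ M ≤ Module.finrank ℤ A := by
      have hsmul : Function.Injective ((LinearMap.lsmul ℤ M n).codRestrict A h) := by
        intro x y hxy
        have hxy2 : n • x = n • y := congrArg Subtype.val hxy
        exact smul_right_injective M hn hxy2
      exact LinearMap.finrank_le_finrank_of_injective hsmul
    omega
  exact bA.reindex (finCongr hcard)

def funEquiv3 : (Fin 3 → ℤ) ≃+ (ℤ × ℤ × ℤ) where
  toFun f := (f 0, f 1, f 2)
  invFun p := ![p.1, p.2.1, p.2.2]
  left_inv f := by funext i; fin_cases i <;> rfl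
  right_inv p := rfl
  map_add' f g := rfl

noncomputable def latticeEquiv3 (A : AddSubgroup (ℤ × ℤ × ℤ)) (n : ℤ) (hn : n ≠ 0)
    (h : ∀ x : ℤ × ℤ × ℤ, n • x ∈ A) : A ≃+ (ℤ × ℤ × ℤ) := by
  have b3 : Module.Basis (Unit ⊕ Unit ⊕ Unit) ℤ (ℤ × ℤ × ℤ) :=
    (Module.Basis.singleton Unit ℤ).prod ((Module.Basis.singleton Unit ℤ).prod (Module.Basis.singleton Unit ℤ))
  have hmem : ∀ x : ℤ × ℤ × ℤ, n • x ∈ A.toIntSubmodule := fun x => h x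
  have bA : Module.Basis (Fin (Fintype.card (Unit ⊕ Unit ⊕ Unit))) ℤ A.toIntSubmodule :=
    latticeBasis b3 A.toIntSubmodule n hn hmem
  have e0 : A ≃+ A.toIntSubmodule := AddEquiv.refl _
  have h3 : Fintype.card (Unit ⊕ Unit ⊕ Unit) = 3 := by decide
  exact e0.trans ((bA.reindex (finCongr h3)).equivFun.toAddEquiv.trans funEquiv3)

lemma lattice2_basis (L : AddSubgroup (ℤ × ℤ)) (n : ℤ) (hn : n ≠ 0)
    (h : ∀ x : ℤ × ℤ, n • x ∈ L) :
    ∃ u₁ u₂ : ℤ × ℤ, u₁ ∈ L ∧ u₂ ∈ L ∧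
      (∀ a b : ℤ, a • u₁ + b • u₂ = 0 → a = 0 ∧ b = 0) ∧
      (∀ w ∈ L, ∃ a b : ℤ, w = a • u₁ + b • u₂) := by
  have b2 : Module.Basis (Unit ⊕ Unit) ℤ (ℤ × ℤ) :=
    (Module.Basis.singleton Unit ℤ).prod (Module.Basis.singleton Unit ℤ)
  have hmem : ∀ x : ℤ × ℤ, n • x ∈ L.toIntSubmodule := fun x => h x
  have h2 : Fintype.card (Unit ⊕ Unit) = 2 := by decide
  have bL : Module.Basis (Fin 2) ℤ L.toIntSubmodule :=
    (latticeBasis b2 L.toIntSubmodule n hn hmem).reindex (finCongr h2)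
  refine ⟨(bL 0 : ℤ × ℤ), (bL 1 : ℤ × ℤ), (bL 0).2, (bL 1).2, ?_, ?_⟩
  · intro a b hab
    have hz : a • bL 0 + b • bL 1 = 0 := by
      apply Subtype.ext
      simpa using hab
    have hli := bL.linearIndependent
    rw [Fintype.linearIndependent_iff] at hli
    have := hli ![a, b] (by simpa [Fin.sum_univ_two] using hz)
    exact ⟨this 0, this 1⟩
  · intro w hw
    have hrep := bL.sum_repr ⟨w, hw⟩
    rw [Fin.sum_univ_two] at hrep
    refine ⟨bL.repr ⟨w, hw⟩ 0, bL.repr ⟨w, hw⟩ 1, ?_⟩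
    have := congrArg Subtype.val hrep
    simpa using this.symm
lemma rels_eq_one {r : FreeGroup (Fin 3)} (h : r ∈ relsG2) :
    PresentedGroup.mk relsG2 r = 1 :=
  (QuotientGroup.eq_one_iff r).mpr (Subgroup.subset_normalClosure h)

lemma XY_comm : X * Y = Y * X := by
  have h := rels_eq_one (show _ ∈ relsG2 from Set.mem_insert _ _)
  simp only [map_mul, map_inv] at h
  have key : X * Y * X⁻¹ * Y⁻¹ = 1 := h
  have h2 : X * Y = (X * Y * X⁻¹ * Y⁻¹) * (Y * X) := by group
  rw [h2, key, one_mul]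

lemma ZXZ : Z * X * Z⁻¹ = X⁻¹ := by
  have h := rels_eq_one (show _ ∈ relsG2 from Set.mem_insert_of_mem _ (Set.mem_insert _ _))
  simp only [map_mul, map_inv] at h
  have key : Z * X * Z⁻¹ * X = 1 := h
  have h2 : Z * X * Z⁻¹ = (Z * X * Z⁻¹ * X) * X⁻¹ := by group
  rw [h2, key, one_mul]

lemma ZYZ : Z * Y * Z⁻¹ = Y⁻¹ := by
  have h := rels_eq_one (show _ ∈ relsG2 from
    Set.mem_insert_of_mem _ (Set.mem_insert_of_mem _ rfl))
  simp only [map_mul, map_inv] at h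
  have key : Z * Y * Z⁻¹ * Y = 1 := h
  have h2 : Z * Y * Z⁻¹ = (Z * Y * Z⁻¹ * Y) * Y⁻¹ := by group
  rw [h2, key, one_mul]

/-- inversion automorphism of `Multiplicative (ℤ × ℤ)`. -/
def negAut : MulAut (Multiplicative (ℤ × ℤ)) := MulEquiv.inv _

lemma negAut_apply (u : Multiplicative (ℤ × ℤ)) : negAut u = u⁻¹ := rfl

lemma negAut_sq : negAut ^ 2 = 1 := by
  ext u : 1
  simp [negAut, pow_succ]

lemma negAut_even {m : ℤ} (hm : Even m) : negAut ^ m = 1 := by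
  obtain ⟨k, rfl⟩ := hm
  have : k + k = 2 * k := by ring
  rw [this, zpow_mul]
  norm_cast
  rw [negAut_sq, one_zpow]

lemma negAut_odd {m : ℤ} (hm : Odd m) : negAut ^ m = negAut := by
  obtain ⟨k, rfl⟩ := hm
  rw [zpow_add, negAut_even (even_two_mul k), one_mul, zpow_one]

/-- the action of `ℤ` on `ℤ²` by sign. -/
def phi : Multiplicative ℤ →* MulAut (Multiplicative (ℤ × ℤ)) := zpowersHom _ negAut

lemma phi_apply (m : Multiplicative ℤ) : phi m = negAut ^ m.toAdd := rfl

/-- The concrete model of `G₂` : `ℤ² ⋊ ℤ`. -/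
abbrev C : Type := SemidirectProduct (Multiplicative (ℤ × ℤ)) (Multiplicative ℤ) phi

open SemidirectProduct

lemma conj_inl_C (g : C) (w : Multiplicative (ℤ × ℤ)) :
    g * inl w * g⁻¹ = inl (phi g.right w) := by
  ext : 1
  · simp only [mul_left, left_inl, right_inl, inv_left, mul_right, mul_one, map_mul]
    have h1 : phi g.right ((phi g.right⁻¹) g.left⁻¹) = g.left⁻¹ := by
      rw [← MulAut.mul_apply, ← map_mul, mul_inv_cancel, map_one, MulAut.one_apply]
    rw [h1, mul_comm g.left _, mul_assoc, mul_inv_cancel, mul_one]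
  · simp only [mul_right, right_inl, inv_right, mul_one, left_inl]
    simp

/-- the hom `ℤ² →* G2`, `(a,b) ↦ X^a Y^b`. -/
def xyHom : Multiplicative (ℤ × ℤ) →* G2 where
  toFun u := X ^ u.toAdd.1 * Y ^ u.toAdd.2
  map_one' := by simp
  map_mul' u v := by
    have hc : Commute X Y := XY_comm
    have h1 : Commute (X ^ v.toAdd.1) (Y ^ u.toAdd.2) := (hc.zpow_zpow _ _)
    show X ^ (u.toAdd.1 + v.toAdd.1) * Y ^ (u.toAdd.2 + v.toAdd.2) = _
    rw [zpow_add, zpow_add, h1.mul_mul_mul_comm]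

lemma xyHom_apply (u : Multiplicative (ℤ × ℤ)) :
    xyHom u = X ^ u.toAdd.1 * Y ^ u.toAdd.2 := rfl

lemma cZ_sq : (MulAut.conj Z) ^ 2 = 1 := by
  have h : ((MulAut.conj Z) ^ 2).toMonoidHom = MonoidHom.id G2 := by
    apply PresentedGroup.ext
    intro i
    have hpow : ∀ g : G2, ((MulAut.conj Z) ^ 2) g = Z * (Z * g * Z⁻¹) * Z⁻¹ := by
      intro g; rw [sq]; rfl
    fin_cases i
    · show ((MulAut.conj Z) ^ 2).toMonoidHom X = X
      rw [MulEquiv.coe_toMonoidHom, hpow, ZXZ]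
      have h2 : Z * X⁻¹ * Z⁻¹ = (Z * X * Z⁻¹)⁻¹ := by group
      rw [h2, ZXZ, inv_inv]
    · show ((MulAut.conj Z) ^ 2).toMonoidHom Y = Y
      rw [MulEquiv.coe_toMonoidHom, hpow, ZYZ]
      have h2 : Z * Y⁻¹ * Z⁻¹ = (Z * Y * Z⁻¹)⁻¹ := by group
      rw [h2, ZYZ, inv_inv]
    · show ((MulAut.conj Z) ^ 2).toMonoidHom Z = Z
      rw [MulEquiv.coe_toMonoidHom, hpow]
      group
  ext g
  have := DFunLike.congr_fun h g
  simpa using this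

lemma cZ_even {m : ℤ} (hm : Even m) : (MulAut.conj Z) ^ m = 1 := by
  obtain ⟨k, rfl⟩ := hm
  have h2 : k + k = 2 * k := by ring
  rw [h2, zpow_mul]
  norm_cast
  rw [cZ_sq, one_zpow]

lemma cZ_odd {m : ℤ} (hm : Odd m) : (MulAut.conj Z) ^ m = MulAut.conj Z := by
  obtain ⟨k, rfl⟩ := hm
  rw [zpow_add, cZ_even (even_two_mul k), one_mul, zpow_one]

lemma conjZ_xy (u : Multiplicative (ℤ × ℤ)) : Z * xyHom u * Z⁻¹ = xyHom u⁻¹ := by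
  rw [xyHom_apply, xyHom_apply]
  have hsplit : Z * (X ^ u.toAdd.1 * Y ^ u.toAdd.2) * Z⁻¹ =
      (Z * X * Z⁻¹) ^ u.toAdd.1 * (Z * Y * Z⁻¹) ^ u.toAdd.2 := by
    rw [conj_zpow, conj_zpow]; group
  rw [hsplit, ZXZ, ZYZ]
  have h1 : (u⁻¹).toAdd.1 = -(u.toAdd.1) := rfl
  have h2 : (u⁻¹).toAdd.2 = -(u.toAdd.2) := rfl
  rw [h1, h2, zpow_neg, zpow_neg, inv_zpow, inv_zpow]

lemma conjZ_zpow_xy (m : ℤ) (u : Multiplicative (ℤ × ℤ)) :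
    Z ^ m * xyHom u * (Z ^ m)⁻¹ = xyHom ((negAut ^ m) u) := by
  have hc : Z ^ m * xyHom u * (Z ^ m)⁻¹ = ((MulAut.conj Z) ^ m) (xyHom u) := by
    rw [← map_zpow MulAut.conj Z m]; rfl
  rcases Int.even_or_odd m with he | ho
  · rw [hc, cZ_even he, negAut_even he]; rfl
  · rw [hc, cZ_odd ho, negAut_odd ho]
    show Z * xyHom u * Z⁻¹ = xyHom (negAut u)
    rw [conjZ_xy, negAut_apply]

/-- `C →* G2`. -/
def toG2 : C →* G2 :=
  SemidirectProduct.lift xyHom (zpowersHom G2 Z) (by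
    intro g
    refine MonoidHom.ext fun u => ?_
    show xyHom (phi g u) = MulAut.conj ((zpowersHom G2 Z) g) (xyHom u)
    rw [phi_apply, zpowersHom_apply, MulAut.conj_apply, conjZ_zpow_xy])

def genC : Fin 3 → C :=
  ![inl (Multiplicative.ofAdd ((1 : ℤ), (0 : ℤ))),
    inl (Multiplicative.ofAdd ((0 : ℤ), (1 : ℤ))),
    inr (Multiplicative.ofAdd (1 : ℤ))]

lemma relsC : ∀ r ∈ relsG2, FreeGroup.lift genC r = 1 := by
  intro r hr
  have hphi : phi (Multiplicative.ofAdd (1 : ℤ)) = negAut := by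
    rw [phi_apply]
    show negAut ^ (1 : ℤ) = negAut
    rw [zpow_one]
  rcases hr with rfl | rfl | rfl
  · simp only [map_mul, map_inv, FreeGroup.lift_apply_of, genC]
    simp only [Matrix.cons_val_zero, Matrix.cons_val_one, Matrix.head_cons]
    rw [← map_inv inl, ← map_inv inl, ← map_mul inl, ← map_mul inl, ← map_mul inl]
    rw [show (Multiplicative.ofAdd ((1:ℤ), (0:ℤ)) * Multiplicative.ofAdd ((0:ℤ), (1:ℤ)) *
      (Multiplicative.ofAdd ((1:ℤ), (0:ℤ)))⁻¹ * (Multiplicative.ofAdd ((0:ℤ), (1:ℤ)))⁻¹) = 1 by decide]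
    exact map_one inl
  · simp only [map_mul, map_inv, FreeGroup.lift_apply_of, genC]
    simp only [Matrix.cons_val_zero, Matrix.cons_val_one, Matrix.head_cons, Matrix.cons_val_two, Matrix.tail_cons]
    rw [← map_inv inr, ← inl_aut]
    rw [← map_mul inl, hphi]
    rw [show (negAut (Multiplicative.ofAdd ((1:ℤ), (0:ℤ))) * Multiplicative.ofAdd ((1:ℤ), (0:ℤ))) = 1 by decide]
    exact map_one inl
  · simp only [map_mul, map_inv, FreeGroup.lift_apply_of, genC]
    simp only [Matrix.cons_val_zero, Matrix.cons_val_one, Matrix.head_cons, Matrix.cons_val_two, Matrix.tail_cons]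
    rw [← map_inv inr, ← inl_aut]
    rw [← map_mul inl, hphi]
    rw [show (negAut (Multiplicative.ofAdd ((0:ℤ), (1:ℤ))) * Multiplicative.ofAdd ((0:ℤ), (1:ℤ))) = 1 by decide]
    exact map_one inl

/-- `G2 →* C`. -/
def toC : G2 →* C := PresentedGroup.toGroup relsC

lemma toG2_comp_toC : toG2.comp toC = MonoidHom.id G2 := by
  apply PresentedGroup.ext
  intro i
  fin_cases i
  · show toG2 (toC X) = X
    rw [show toC X = genC 0 from PresentedGroup.toGroup.of relsC]
    show toG2 (inl (Multiplicative.ofAdd ((1:ℤ), (0:ℤ)))) = X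
    rw [toG2, SemidirectProduct.lift_inl, xyHom_apply]
    show X ^ (1:ℤ) * Y ^ (0:ℤ) = X
    simp
  · show toG2 (toC Y) = Y
    rw [show toC Y = genC 1 from PresentedGroup.toGroup.of relsC]
    show toG2 (inl (Multiplicative.ofAdd ((0:ℤ), (1:ℤ)))) = Y
    rw [toG2, SemidirectProduct.lift_inl, xyHom_apply]
    show X ^ (0:ℤ) * Y ^ (1:ℤ) = Y
    simp
  · show toG2 (toC Z) = Z
    rw [show toC Z = genC 2 from PresentedGroup.toGroup.of relsC]
    show toG2 (inr (Multiplicative.ofAdd (1:ℤ))) = Z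
    rw [toG2, SemidirectProduct.lift_inr, zpowersHom_apply]
    show Z ^ (1:ℤ) = Z
    simp

lemma toC_X : toC X = inl (Multiplicative.ofAdd ((1:ℤ), (0:ℤ))) := PresentedGroup.toGroup.of relsC
lemma toC_Y : toC Y = inl (Multiplicative.ofAdd ((0:ℤ), (1:ℤ))) := PresentedGroup.toGroup.of relsC
lemma toC_Z : toC Z = inr (Multiplicative.ofAdd (1:ℤ)) := PresentedGroup.toGroup.of relsC

lemma inl_zpow (u : Multiplicative (ℤ × ℤ)) (n : ℤ) : (inl u : C) ^ n = inl (u ^ n) :=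
  (map_zpow inl u n).symm

lemma ofAdd_prod_zpow (a b n : ℤ) :
    (Multiplicative.ofAdd ((a, b) : ℤ × ℤ)) ^ n = Multiplicative.ofAdd ((n * a, n * b) : ℤ × ℤ) := by
  rw [← ofAdd_zsmul]
  norm_num [Prod.smul_def, smul_eq_mul]

lemma toC_comp_toG2 : toC.comp toG2 = MonoidHom.id C := by
  apply SemidirectProduct.hom_ext
  · refine MonoidHom.ext fun u => ?_
    show toC (toG2 (inl u)) = inl u
    rw [toG2, SemidirectProduct.lift_inl, xyHom_apply, map_mul, map_zpow, map_zpow,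
      toC_X, toC_Y, inl_zpow, inl_zpow, ofAdd_prod_zpow, ofAdd_prod_zpow, ← map_mul inl]
    rw [← ofAdd_add]
    norm_num
  · refine MonoidHom.ext fun g => ?_
    show toC (toG2 (inr g)) = inr g
    rw [toG2, SemidirectProduct.lift_inr, zpowersHom_apply, map_zpow, toC_Z,
      ← map_zpow inr, ← ofAdd_zsmul]
    norm_num

/-- the isomorphism `G2 ≃* C`. -/
noncomputable def isoG2C : G2 ≃* C := MonoidHom.toMulEquiv toC toG2 toG2_comp_toC toC_comp_toG2
section EvenCase

variable (H : Subgroup C)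

/-- the canonical map `ℤ³ → C`. -/
def cOf (p : ℤ × ℤ × ℤ) : C :=
  ⟨Multiplicative.ofAdd (p.1, p.2.1), Multiplicative.ofAdd p.2.2⟩

lemma cOf_left (p : ℤ × ℤ × ℤ) : (cOf p).left = Multiplicative.ofAdd (p.1, p.2.1) := rfl
lemma cOf_right (p : ℤ × ℤ × ℤ) : (cOf p).right = Multiplicative.ofAdd p.2.2 := rfl

lemma cOf_eq (p : ℤ × ℤ × ℤ) :
    cOf p = inl (Multiplicative.ofAdd (p.1, p.2.1)) * inr (Multiplicative.ofAdd p.2.2) :=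
  mk_eq_inl_mul_inr _ _

lemma cOf_mul (p q : ℤ × ℤ × ℤ) (hp : Even p.2.2) : cOf p * cOf q = cOf (p + q) := by
  have h1 : phi (Multiplicative.ofAdd p.2.2) = 1 := by
    rw [phi_apply]
    exact negAut_even hp
  ext : 1
  · show (cOf p).left * phi (cOf p).right (cOf q).left = (cOf (p + q)).left
    rw [cOf_right, h1, cOf_left, cOf_left, cOf_left, MulAut.one_apply, ← ofAdd_add]
    rfl
  · show (cOf p).right * (cOf q).right = (cOf (p+q)).right
    rw [cOf_right, cOf_right, cOf_right, ← ofAdd_add]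
    rfl

lemma cOf_inv (p : ℤ × ℤ × ℤ) (hp : Even p.2.2) : (cOf p)⁻¹ = cOf (-p) := by
  have h1 : phi ((cOf p).right)⁻¹ = 1 := by
    rw [cOf_right, ← ofAdd_neg, phi_apply]
    exact negAut_even (by simpa using hp.neg)
  ext : 1
  · show phi ((cOf p).right)⁻¹ ((cOf p).left)⁻¹ = (cOf (-p)).left
    rw [h1, MulAut.one_apply, cOf_left, cOf_left, ← ofAdd_neg]
    rfl
  · show ((cOf p).right)⁻¹ = (cOf (-p)).right
    rw [cOf_right, cOf_right, ← ofAdd_neg]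
    rfl

lemma even_case (n : ℤ) (hn : n ≠ 0) (hpow : ∀ g : C, g ^ n ∈ H)
    (heven : ∀ h : C, h ∈ H → Even (SemidirectProduct.right h).toAdd) :
    Nonempty (H ≃* Multiplicative (ℤ × ℤ × ℤ)) := by
  -- the additive subgroup corresponding to `H`
  have hEvenMem : ∀ p : ℤ × ℤ × ℤ, cOf p ∈ H → Even p.2.2 := fun p hp => heven _ hp
  let A : AddSubgroup (ℤ × ℤ × ℤ) :=
    { carrier := {p | cOf p ∈ H}
      zero_mem' := by
        show cOf 0 ∈ H
        have : cOf 0 = 1 := rfl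
        rw [this]; exact one_mem H
      add_mem' := by
        intro p q hp hq
        show cOf (p + q) ∈ H
        rw [← cOf_mul p q (hEvenMem p hp)]
        exact mul_mem hp hq
      neg_mem' := by
        intro p hp
        show cOf (-p) ∈ H
        rw [← cOf_inv p (hEvenMem p hp)]
        exact inv_mem hp }
  have hAmem : ∀ p : ℤ × ℤ × ℤ, p ∈ A ↔ cOf p ∈ H := fun p => Iff.rfl
  -- `H ≃* Multiplicative A`
  have e1 : H ≃* Multiplicative A :=
    { toFun := fun h => Multiplicative.ofAdd
        ⟨((h : C).left.toAdd.1, (h : C).left.toAdd.2, (h : C).right.toAdd), h.2⟩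
      invFun := fun p => ⟨cOf p.toAdd.1, p.toAdd.2⟩
      left_inv := fun h => rfl
      right_inv := fun p => rfl
      map_mul' := by
        intro h g
        apply congrArg Multiplicative.ofAdd
        apply Subtype.ext
        show _ = (_ + _ : ℤ × ℤ × ℤ)
        have h1 : phi ((h : C).right) = 1 := by
          rw [phi_apply]; exact negAut_even (heven _ h.2)
        refine Prod.ext ?_ (Prod.ext ?_ ?_)
        · show (((h : C) * (g : C)).left).toAdd.1 = _
          rw [mul_left, h1, MulAut.one_apply]
          rfl
        · show (((h : C) * (g : C)).left).toAdd.2 = _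
          rw [mul_left, h1, MulAut.one_apply]
          rfl
        · rfl }
  -- `A` has finite index
  have hA : ∀ x : ℤ × ℤ × ℤ, (2 * n) • x ∈ A := by
    intro x
    obtain ⟨a, b, m⟩ := x
    show cOf ((2 * n) • (a, b, m)) ∈ H
    have hsmul : (2 * n) • ((a : ℤ), (b : ℤ), (m : ℤ)) = (2 * n * a, 2 * n * b, 2 * n * m) := by
      simp [Prod.smul_def, smul_eq_mul]
    rw [hsmul, cOf_eq]
    have hg1 : (inl (Multiplicative.ofAdd ((2 * a : ℤ), (2 * b : ℤ))) : C) ^ n =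
        inl (Multiplicative.ofAdd ((2 * n * a : ℤ), (2 * n * b : ℤ))) := by
      rw [inl_zpow, ofAdd_prod_zpow]
      ring_nf
    have hg2 : (inr (Multiplicative.ofAdd ((2 * m : ℤ))) : C) ^ n =
        inr (Multiplicative.ofAdd ((2 * n * m : ℤ))) := by
      rw [← map_zpow inr, ← ofAdd_zsmul, smul_eq_mul, show n * (2 * m) = 2 * n * m by ring]
    rw [show ((2 * n * a : ℤ), (2 * n * b : ℤ)) = (((2 * n * a : ℤ), (2 * n * b : ℤ)) : ℤ × ℤ) from rfl]
    rw [← hg1, ← hg2]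
    exact mul_mem (hpow _) (hpow _)
  have e2 : A ≃+ (ℤ × ℤ × ℤ) := latticeEquiv3 A (2 * n) (by simpa using hn) hA
  exact ⟨e1.trans (AddEquiv.toMultiplicative e2)⟩

end EvenCase
section OddCase

lemma odd_case (H : Subgroup C) (n : ℤ) (hn : n ≠ 0) (hpow : ∀ g : C, g ^ n ∈ H)
    (t : C) (htH : t ∈ H) (hodd : Odd (SemidirectProduct.right t).toAdd) :
    Nonempty (H ≃* C) := by
  classical
  -- the subgroup of `ℤ` of `z`-coordinates of elements of `H`
  let P : AddSubgroup ℤ :=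
    { carrier := {m | ∃ h : C, h ∈ H ∧ h.right = Multiplicative.ofAdd m}
      zero_mem' := ⟨1, one_mem H, rfl⟩
      add_mem' := by
        rintro a b ⟨h, hH, hr⟩ ⟨g, gH, gr⟩
        exact ⟨h * g, mul_mem hH gH, by rw [mul_right, hr, gr, ← ofAdd_add]⟩
      neg_mem' := by
        rintro a ⟨h, hH, hr⟩
        exact ⟨h⁻¹, inv_mem hH, by rw [inv_right, hr, ← ofAdd_neg]⟩ }
    -- `P` is cyclic, generated by some odd `c`
  obtain ⟨c, hc⟩ := Int.subgroup_cyclic P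
  have hmemP : ∀ m : ℤ, m ∈ P ↔ ∃ k : ℤ, k • c = m := by
    intro m
    rw [hc, AddSubgroup.mem_closure_singleton]
  have htP : (SemidirectProduct.right t).toAdd ∈ P := ⟨t, htH, rfl⟩
  have hcodd : Odd c := by
    obtain ⟨k, hk⟩ := (hmemP _).mp htP
    rw [← hk, smul_eq_mul] at hodd
    exact (Int.odd_mul.mp hodd).2
  have hcne : c ≠ 0 := by
    rintro rfl
    exact (Int.not_odd_iff_even.mpr Even.zero) hcodd
  -- an element `s ∈ H` with `z`-coordinate `c`
  obtain ⟨s, hsH, hsr⟩ : ∃ s : C, s ∈ H ∧ s.right = Multiplicative.ofAdd c := by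
    have : c ∈ P := (hmemP c).mpr ⟨1, one_smul _ _⟩
    exact this
  -- the lattice of `(x,y)`-coordinates of elements of `H ∩ ℤ²`
  let L : AddSubgroup (ℤ × ℤ) :=
    { carrier := {u | (inl (Multiplicative.ofAdd u) : C) ∈ H}
      zero_mem' := by
        show (inl (Multiplicative.ofAdd (0 : ℤ × ℤ)) : C) ∈ H
        rw [show Multiplicative.ofAdd (0 : ℤ × ℤ) = 1 from rfl, map_one]
        exact one_mem H
      add_mem' := by
        intro u v hu hv
        show (inl (Multiplicative.ofAdd (u + v)) : C) ∈ H
        rw [ofAdd_add, map_mul]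
        exact mul_mem hu hv
      neg_mem' := by
        intro u hu
        show (inl (Multiplicative.ofAdd (-u)) : C) ∈ H
        rw [ofAdd_neg, map_inv]
        exact inv_mem hu }
  have hLmem : ∀ u : ℤ × ℤ, u ∈ L ↔ (inl (Multiplicative.ofAdd u) : C) ∈ H := fun u => Iff.rfl
  have hL : ∀ u : ℤ × ℤ, n • u ∈ L := by
    intro u
    show (inl (Multiplicative.ofAdd (n • u)) : C) ∈ H
    rw [ofAdd_zsmul, map_zpow]
    exact hpow _
  obtain ⟨u₁, u₂, hu₁, hu₂, hind, hspan⟩ := lattice2_basis L n hn hL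
  -- the homomorphism `C →* C` with range `H`
  let linmap : ℤ × ℤ →+ ℤ × ℤ :=
    { toFun := fun u => u.1 • u₁ + u.2 • u₂
      map_zero' := by simp
      map_add' := by
        intro u v
        show (u.1 + v.1) • u₁ + (u.2 + v.2) • u₂ = _
        rw [add_smul, add_smul]
        abel_nf }
  let f₁ : Multiplicative (ℤ × ℤ) →* C := inl.comp (AddMonoidHom.toMultiplicative linmap)
  have hf₁ : ∀ u : Multiplicative (ℤ × ℤ),
      f₁ u = inl (Multiplicative.ofAdd (u.toAdd.1 • u₁ + u.toAdd.2 • u₂)) := fun u => rfl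
  let f₂ : Multiplicative ℤ →* C := zpowersHom C s
  have hsr_pow : ∀ m : ℤ, SemidirectProduct.rightHom (s ^ m) = Multiplicative.ofAdd (m * c) := by
    intro m
    rw [map_zpow]
    rw [show SemidirectProduct.rightHom s = s.right from rfl, hsr, ← ofAdd_zsmul, smul_eq_mul]
  have hcomp : ∀ g : Multiplicative ℤ, f₁.comp (phi g).toMonoidHom =
      (MulAut.conj (f₂ g)).toMonoidHom.comp f₁ := by
    intro g
    refine MonoidHom.ext fun u => ?_
    show f₁ (phi g u) = MulAut.conj (s ^ g.toAdd) (f₁ u)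
    rw [MulAut.conj_apply, hf₁ u, conj_inl_C (s ^ g.toAdd)]
    have hright : (s ^ g.toAdd).right = Multiplicative.ofAdd (g.toAdd * c) := hsr_pow g.toAdd
    rw [hright, phi_apply, phi_apply, toAdd_ofAdd]
    rcases Int.even_or_odd g.toAdd with he | ho
    · rw [negAut_even he, negAut_even (he.mul_right c), MulAut.one_apply, MulAut.one_apply, hf₁ u]
    · rw [negAut_odd ho, negAut_odd (ho.mul hcodd), negAut_apply, negAut_apply, map_inv f₁,
        hf₁ u, ← map_inv inl]
  let f : C →* C := SemidirectProduct.lift f₁ f₂ hcomp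
  have hf : ∀ x : C, f x = f₁ x.left * s ^ x.right.toAdd := by
    intro x
    conv_lhs => rw [← inl_left_mul_inr_right x]
    rw [map_mul]
    congr 1
    · exact SemidirectProduct.lift_inl _ _ _ _
    · exact SemidirectProduct.lift_inr _ _ _ _
  -- `f` is injective
  have hinj : Function.Injective f := by
    rw [injective_iff_map_eq_one]
    intro x hx
    have hr : SemidirectProduct.rightHom (f x) = 1 := by rw [hx, map_one]
    rw [hf, map_mul, hf₁, rightHom_inl, one_mul, hsr_pow] at hr
    have hm : x.right.toAdd * c = 0 := congrArg Multiplicative.toAdd hr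
    have hm0 : x.right.toAdd = 0 := by
      rcases mul_eq_zero.mp hm with h | h
      · exact h
      · exact absurd h hcne
    have hxr : x.right = 1 := by
      rw [show (1 : Multiplicative ℤ) = Multiplicative.ofAdd 0 from rfl, ← hm0]
      rfl
    rw [hf, hm0, zpow_zero, mul_one, hf₁] at hx
    have hlin : x.left.toAdd.1 • u₁ + x.left.toAdd.2 • u₂ = 0 := by
      have := inl_injective hx
      have h2 := congrArg Multiplicative.toAdd this
      simpa using h2
    obtain ⟨h1, h2⟩ := hind _ _ hlin
    have hxl : x.left = 1 := by
      have : x.left.toAdd = 0 := Prod.ext h1 h2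
      rw [show (1 : Multiplicative (ℤ × ℤ)) = Multiplicative.ofAdd 0 from rfl, ← this]
      rfl
    ext : 1
    · rw [hxl]; rfl
    · rw [hxr]; rfl
  -- the range of `f` is `H`
  have hrange : f.range = H := by
    apply le_antisymm
    · rintro _ ⟨x, rfl⟩
      rw [hf, hf₁]
      refine mul_mem ?_ (zpow_mem hsH _)
      exact add_mem (AddSubgroup.zsmul_mem L hu₁ _) (AddSubgroup.zsmul_mem L hu₂ _)
    · intro h hh
      have hmP : h.right.toAdd ∈ P := ⟨h, hh, rfl⟩
      obtain ⟨k, hk⟩ := (hmemP _).mp hmP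
      set g := h * (s ^ k)⁻¹ with hg
      have hgH : g ∈ H := mul_mem hh (inv_mem (zpow_mem hsH _))
      have hgr : g.right = 1 := by
        have h2 : Multiplicative.ofAdd (k * c) = h.right := by
          rw [← smul_eq_mul, hk]
          rfl
        have : SemidirectProduct.rightHom g = 1 := by
          rw [hg, map_mul, map_inv, hsr_pow,
            show SemidirectProduct.rightHom h = h.right from rfl, h2, mul_inv_cancel]
        exact this
      have hgl : g = inl g.left := by
        conv_lhs => rw [← inl_left_mul_inr_right g]
        rw [hgr, map_one, mul_one]
      have hglL : g.left.toAdd ∈ L := by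
        rw [hLmem]
        have : Multiplicative.ofAdd g.left.toAdd = g.left := rfl
        rw [this, ← hgl]
        exact hgH
      obtain ⟨a, b, hab⟩ := hspan _ hglL
      refine ⟨⟨Multiplicative.ofAdd (a, b), Multiplicative.ofAdd k⟩, ?_⟩
      rw [hf]
      have h1 : f₁ (⟨Multiplicative.ofAdd ((a : ℤ), (b : ℤ)), Multiplicative.ofAdd k⟩ : C).left
          = inl g.left := by
        rw [hf₁]
        congr 1
        rw [show g.left = Multiplicative.ofAdd g.left.toAdd from rfl, hab]
        rfl
      rw [h1]
      show inl g.left * s ^ ((Multiplicative.ofAdd k).toAdd) = h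
      rw [show (Multiplicative.ofAdd k).toAdd = k from rfl, ← hgl, hg]
      group
  have e1 : C ≃* f.range := MonoidHom.ofInjective hinj
  exact ⟨(e1.trans (MulEquiv.subgroupCongr hrange)).symm⟩

end OddCase

lemma exists_zpow_mem {G : Type*} [Group G] (H : Subgroup G) (hfin : H.index ≠ 0) :
    ∃ n : ℤ, n ≠ 0 ∧ ∀ g : G, g ^ n ∈ H := by
  have : H.FiniteIndex := ⟨hfin⟩
  have h2 : H.normalCore.FiniteIndex := inferInstance
  refine ⟨(H.normalCore.index : ℤ), by exact_mod_cast h2.index_ne_zero, fun g => ?_⟩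
  rw [zpow_natCast]
  exact H.normalCore_le (H.normalCore.pow_index_mem g)

lemma main_C (H : Subgroup C) (hfin : H.index ≠ 0) :
    Nonempty (H ≃* C) ∨ Nonempty (H ≃* Multiplicative (ℤ × ℤ × ℤ)) := by
  obtain ⟨n, hn, hpow⟩ := exists_zpow_mem H hfin
  by_cases hodd : ∃ t : C, t ∈ H ∧ Odd (SemidirectProduct.right t).toAdd
  · obtain ⟨t, htH, ht⟩ := hodd
    exact Or.inl (odd_case H n hn hpow t htH ht)
  · push_neg at hodd
    refine Or.inr (even_case H n hn hpow ?_)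
    intro h hh
    exact Int.not_odd_iff_even.mp (hodd h hh)

/-- Every finite-index subgroup of `G₂` is isomorphic to `G₂` itself or to `ℤ³`. -/
theorem G2_finite_index_subgroups (H : Subgroup G2) (hfin : H.index ≠ 0) :
    Nonempty (H ≃* G2) ∨ Nonempty (H ≃* Multiplicative (ℤ × ℤ × ℤ)) := by
  let H' : Subgroup C := H.map isoG2C.toMonoidHom
  have eHH' : H ≃* H' := Subgroup.equivMapOfInjective H isoG2C.toMonoidHom isoG2C.injective
  have hidx : H'.index = H.index :=
    H.index_map_eq isoG2C.surjective
      (by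
        intro x hx
        have hx1 : isoG2C.toMonoidHom x = 1 := hx
        have hx2 : x = 1 := by
          apply isoG2C.injective
          rw [show isoG2C x = isoG2C.toMonoidHom x from rfl, hx1, map_one]
        rw [hx2]; exact one_mem H)
  have hfin' : H'.index ≠ 0 := by rw [hidx]; exact hfin
  rcases main_C H' hfin' with ⟨⟨e⟩⟩ | ⟨⟨e⟩⟩
  · exact Or.inl ⟨(eHH'.trans e).trans isoG2C.symm⟩
  · exact Or.inr ⟨eHH'.trans e⟩
end

section
/- For every n ≥ 1, the identity ∑_{a∣n, a odd} (σ₁(n/a) + 3σ₁(n/(2a))) = σ₂(n) + 2σ₂(n/2) − 3σ₂(n/4) holds, where σ₂(m) = ∑_{k∣m} σ₁(k) and σ₁ and σ₂ are taken to be 0 at non-integer arguments. -/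
/-- σ₁(n): the sum of the divisors of `n`. -/
def sigma1 (n : ℕ) : ℕ := ∑ d ∈ n.divisors, d

/-- σ₂(n) = ∑_{k ∣ n} σ₁(k). -/
def sigma2 (n : ℕ) : ℕ := ∑ k ∈ n.divisors, sigma1 k

lemma even_sum (n : ℕ) (h : 2 ∣ n) :
    ∑ a ∈ n.divisors.filter (fun a => ¬ Odd a), sigma1 (n / a) = sigma2 (n / 2) := by
  rcases eq_or_ne n 0 with rfl | hn
  · simp [sigma2]
  rw [sigma2, ← Nat.sum_div_divisors (n/2) sigma1]
  refine Finset.sum_nbij' (fun a => a / 2) (fun b => 2 * b) ?_ ?_ ?_ ?_ ?_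
  · intro a ha
    simp only [Finset.mem_filter, Nat.mem_divisors, Nat.not_odd_iff_even] at ha ⊢
    obtain ⟨⟨had, -⟩, he⟩ := ha
    obtain ⟨c, rfl⟩ := he.two_dvd
    rw [Nat.mul_div_cancel_left _ (by norm_num)]
    exact ⟨Nat.dvd_div_iff_mul_dvd h |>.mpr had, by omega⟩
  · intro b hb
    simp only [Finset.mem_filter, Nat.mem_divisors, Nat.not_odd_iff_even] at hb ⊢
    exact ⟨⟨(Nat.dvd_div_iff_mul_dvd h).mp hb.1, hn⟩, even_two_mul b⟩
  · intro a ha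
    simp only [Finset.mem_filter, Nat.mem_divisors, Nat.not_odd_iff_even] at ha
    exact Nat.mul_div_cancel' ha.2.two_dvd
  · intro b hb
    exact Nat.mul_div_cancel_left _ (by norm_num)
  · intro a ha
    simp only [Finset.mem_filter, Nat.mem_divisors, Nat.not_odd_iff_even] at ha
    rw [Nat.div_div_eq_div_mul, Nat.mul_div_cancel' ha.2.two_dvd]

lemma odd_sum (n : ℕ) (hn : n ≠ 0) :
    (∑ a ∈ n.divisors.filter (fun a => Odd a), (sigma1 (n / a) : ℤ))
      = (sigma2 n : ℤ) - (if 2 ∣ n then (sigma2 (n / 2) : ℤ) else 0) := by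
  have htot : ∑ a ∈ n.divisors.filter (fun a => Odd a), sigma1 (n / a)
      + ∑ a ∈ n.divisors.filter (fun a => ¬ Odd a), sigma1 (n / a) = sigma2 n := by
    rw [Finset.sum_filter_add_sum_filter_not, Nat.sum_div_divisors]; rfl
  by_cases h : 2 ∣ n
  · rw [even_sum n h] at htot
    simp only [h, if_true]
    have := congrArg (Nat.cast : ℕ → ℤ) htot
    push_cast at this
    linarith
  · have hemp : n.divisors.filter (fun a => ¬ Odd a) = ∅ := by
      rw [Finset.filter_eq_empty_iff]
      intro a ha
      rw [Nat.mem_divisors] at ha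
      simp only [not_not]
      rcases Nat.even_or_odd a with he | ho
      · exact absurd (he.two_dvd.trans ha.1) h
      · exact ho
    rw [hemp, Finset.sum_empty, add_zero] at htot
    simp only [h, if_false, sub_zero]
    exact_mod_cast htot

lemma second_sum (n : ℕ) (hn : n ≠ 0) :
    (∑ a ∈ n.divisors.filter (fun a => Odd a),
        (if 2 * a ∣ n then (sigma1 (n / (2 * a)) : ℤ) else 0))
      = (if 2 ∣ n then (sigma2 (n / 2) : ℤ) else 0)
        - (if 4 ∣ n then (sigma2 (n / 4) : ℤ) else 0) := by
  by_cases h : 2 ∣ n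
  · have hm : n / 2 ≠ 0 := by omega
    have hset : n.divisors.filter (fun a => Odd a)
        = (n / 2).divisors.filter (fun a => Odd a) := by
      ext a
      simp only [Finset.mem_filter, Nat.mem_divisors]
      constructor
      · rintro ⟨⟨had, -⟩, ho⟩
        refine ⟨⟨?_, hm⟩, ho⟩
        obtain ⟨c, rfl⟩ := h
        rw [Nat.mul_div_cancel_left _ (by norm_num)]
        exact Nat.Coprime.dvd_of_dvd_mul_left (Nat.coprime_two_right.mpr ho) had
      · rintro ⟨⟨had, -⟩, ho⟩
        exact ⟨⟨had.trans (Nat.div_dvd_of_dvd h), hn⟩, ho⟩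
    have hterm : ∀ a ∈ (n / 2).divisors.filter (fun a => Odd a),
        (if 2 * a ∣ n then (sigma1 (n / (2 * a)) : ℤ) else 0)
          = (sigma1 ((n / 2) / a) : ℤ) := by
      intro a ha
      simp only [Finset.mem_filter, Nat.mem_divisors] at ha
      have h2a : 2 * a ∣ n := (Nat.dvd_div_iff_mul_dvd h).mp ha.1.1
      rw [if_pos h2a, Nat.div_div_eq_div_mul]
    rw [hset, Finset.sum_congr rfl hterm, odd_sum _ hm]
    have h4 : (4 ∣ n) ↔ (2 ∣ n / 2) := by omega
    simp only [h, if_true, h4]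
    rw [Nat.div_div_eq_div_mul]
  · have hzero : ∀ a ∈ n.divisors.filter (fun a => Odd a),
        (if 2 * a ∣ n then (sigma1 (n / (2 * a)) : ℤ) else 0) = 0 := by
      intro a ha
      rw [if_neg fun hd => h ((dvd_mul_right 2 a).trans hd)]
    rw [Finset.sum_congr rfl hzero, Finset.sum_const, smul_zero]
    have h4 : ¬ (4 ∣ n) := fun hd => h (dvd_trans (by norm_num) hd)
    simp [h, h4]

/-- For every `n ≥ 1`,
`∑_{a∣n, a odd} (σ₁(n/a) + 3σ₁(n/(2a))) = σ₂(n) + 2σ₂(n/2) − 3σ₂(n/4)`,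
where `σ₁` and `σ₂` at non-integer arguments are interpreted as `0`. -/
theorem odd_divisor_sum_identity (n : ℕ) (hn : 1 ≤ n) :
    ∑ a ∈ n.divisors.filter (fun a => Odd a),
        ((sigma1 (n / a) : ℤ) +
          3 * (if 2 * a ∣ n then (sigma1 (n / (2 * a)) : ℤ) else 0)) =
      (sigma2 n : ℤ) + 2 * (if 2 ∣ n then (sigma2 (n / 2) : ℤ) else 0) -
        3 * (if 4 ∣ n then (sigma2 (n / 4) : ℤ) else 0) := by
  have hn' : n ≠ 0 := by omega
  rw [Finset.sum_add_distrib, ← Finset.mul_sum, odd_sum n hn', second_sum n hn']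
  by_cases h : 2 ∣ n <;> by_cases h4 : 4 ∣ n <;> simp [h, h4] <;> ring
end
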